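/- Let k be a field of characteristic p, let U be a cyclic group of order p, and let W be a k[U]-module generated by a finite-dimensional k-subspace W' with dim_k(W') = dim_k(W^U). Then the kernel of the induced surjection η: k[U] ⊗_k W' → W is contained in the kernel of the augmentation map ε: k[U] ⊗_k W' → W', ū ⊗ w ↦ w. -/

import Mathlib

open TensorProduct

/-- The `k`-submodule of `U`-invariants of a module over the group algebra `k[U]`. -/
def fixedPts (k U W : Type*) [Field k] [Group U] [AddCommGroup W]
    [Module (MonoidAlgebra k U) W] [Module k W]
    [IsScalarTower k (MonoidAlgebra k U) W] : Submodule k W where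
  carrier := {x | ∀ u : U, MonoidAlgebra.of k U u • x = x}
  add_mem' := by
    intro a b ha hb u
    rw [smul_add, ha u, hb u]
  zero_mem' := by
    intro u
    exact smul_zero _
  smul_mem' := by
    intro c x hx u
    have h1 : (c • x : W) = (algebraMap k (MonoidAlgebra k U) c) • x :=
      (algebraMap_smul (MonoidAlgebra k U) c x).symm
    rw [h1, smul_smul, ← Algebra.commutes c (MonoidAlgebra.of k U u), ← smul_smul, hx u, ← h1]

theorem stmt0 (p : ℕ) [Fact p.Prime] (k U W : Type*) [Field k] [CharP k p]
    [Group U] (hU : IsCyclic U) (hcard : Nat.card U = p)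
    [AddCommGroup W] [Module (MonoidAlgebra k U) W] [Module k W]
    [IsScalarTower k (MonoidAlgebra k U) W]
    (W' : Submodule k W) [FiniteDimensional k W']
    (hgen : Submodule.span (MonoidAlgebra k U) (W' : Set W) = ⊤)
    (hdim : Module.finrank k W' = Module.finrank k (fixedPts k U W))
    (η : MonoidAlgebra k U ⊗[k] W' →ₗ[k] W)
    (hη : ∀ (a : MonoidAlgebra k U) (w : W'), η (a ⊗ₜ[k] w) = a • (w : W))
    (ε : MonoidAlgebra k U ⊗[k] W' →ₗ[k] W')
    (hε : ∀ (a : MonoidAlgebra k U) (w : W'),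
      ε (a ⊗ₜ[k] w) = (MonoidAlgebra.lift k k U 1 a) • w) :
    ∀ x, η x = 0 → ε x = 0 := by
  classical
  haveI : Finite U := Nat.finite_of_card_ne_zero (by simp [hcard, (Fact.out : p.Prime).ne_zero])
  obtain ⟨σ, hσ⟩ := hU.exists_generator
  -- the k-linear map w ↦ σ • w - w
  set T : W →ₗ[k] W :=
    { toFun := fun w => MonoidAlgebra.of k U σ • w - w
      map_add' := by intro a b; rw [smul_add]; abel
      map_smul' := by
        intro c w
        simp only [RingHom.id_apply, smul_sub, smul_comm (MonoidAlgebra.of k U σ) c] } with hT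
  have hTapp : ∀ w : W, T w = MonoidAlgebra.of k U σ • w - w := fun w => rfl
  have hpow : ∀ (m : ℕ) (w : W),
      MonoidAlgebra.of k U (σ ^ m) • w - w ∈ LinearMap.range T := by
    intro m
    induction m with
    | zero => intro w; rw [pow_zero, map_one, one_smul, sub_self]; exact zero_mem _
    | succ n ih =>
      intro w
      have h : MonoidAlgebra.of k U (σ ^ (n + 1)) • w - w
          = T (MonoidAlgebra.of k U (σ ^ n) • w) + (MonoidAlgebra.of k U (σ ^ n) • w - w) := by
        rw [hTapp, pow_succ', map_mul, mul_smul]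
        abel
      rw [h]
      exact add_mem (LinearMap.mem_range_self T _) (ih w)
  have hofin : IsOfFinOrder σ := isOfFinOrder_of_finite σ
  have hu : ∀ (u : U) (w : W), MonoidAlgebra.of k U u • w - w ∈ LinearMap.range T := by
    intro u w
    obtain ⟨m, rfl⟩ := hofin.mem_powers_iff_mem_zpowers.mpr (hσ u)
    exact hpow m w
  have L : ∀ (a : MonoidAlgebra k U) (w : W),
      a • w - ((MonoidAlgebra.lift k k U 1 a) : k) • w ∈ LinearMap.range T := by
    intro a w
    induction a using MonoidAlgebra.induction_on with
    | of u =>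
      simpa [MonoidAlgebra.lift_of] using hu u w
    | add f g hf hg =>
      have h : (f + g) • w - ((MonoidAlgebra.lift k k U 1 (f + g)) : k) • w
          = (f • w - ((MonoidAlgebra.lift k k U 1 f) : k) • w)
            + (g • w - ((MonoidAlgebra.lift k k U 1 g) : k) • w) := by
        rw [add_smul, map_add, add_smul]; abel
      rw [h]; exact add_mem hf hg
    | smul r f hf =>
      have h : (r • f) • w - ((MonoidAlgebra.lift k k U 1 (r • f)) : k) • w
          = r • (f • w - ((MonoidAlgebra.lift k k U 1 f) : k) • w) := by
        rw [map_smul, smul_assoc, smul_assoc, smul_sub]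
      rw [h]; exact Submodule.smul_mem _ r hf
  -- η intertwines left multiplication and the action
  have hηsmul : ∀ (b : MonoidAlgebra k U) (x : MonoidAlgebra k U ⊗[k] W'),
      η (LinearMap.rTensor (W' : Submodule k W) (LinearMap.mulLeft k b) x) = b • η x := by
    intro b x
    induction x using TensorProduct.induction_on with
    | zero => simp
    | tmul a w => simp [hη, mul_smul]
    | add x y hx hy => simp [map_add, hx, hy, smul_add]
  have hηsurj : Function.Surjective η := by
    intro w
    have hw : w ∈ Submodule.span (MonoidAlgebra k U) (W' : Set W) := by rw [hgen]; trivial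
    have : w ∈ LinearMap.range η := by
      induction hw using Submodule.span_induction with
      | mem x hx => exact ⟨(1 : MonoidAlgebra k U) ⊗ₜ ⟨x, hx⟩, by simp [hη]⟩
      | zero => exact zero_mem _
      | add x y hx hy hx' hy' => exact add_mem hx' hy'
      | smul a x hx hx' =>
        obtain ⟨y, hy⟩ := hx'
        exact ⟨LinearMap.rTensor _ (LinearMap.mulLeft k a) y, by rw [hηsmul, hy]⟩
    exact this
  haveI : FiniteDimensional k (MonoidAlgebra k U) :=
    Module.Finite.of_basis (MonoidAlgebra.basis U k)
  haveI : FiniteDimensional k W := Module.Finite.of_surjective η hηsurj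
  -- fixed points = kernel of T
  have hker : LinearMap.ker T = fixedPts k U W := by
    ext x
    constructor
    · intro hx
      have hs : MonoidAlgebra.of k U σ • x = x := by
        have := LinearMap.mem_ker.mp hx
        rw [hTapp, sub_eq_zero] at this
        exact this
      have hmx : ∀ m : ℕ, MonoidAlgebra.of k U (σ ^ m) • x = x := by
        intro m
        induction m with
        | zero => rw [pow_zero, map_one, one_smul]
        | succ n ih => rw [pow_succ', map_mul, mul_smul, ih, hs]
      intro u
      obtain ⟨m, rfl⟩ := hofin.mem_powers_iff_mem_zpowers.mpr (hσ u)
      exact hmx m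
    · intro hx
      have : MonoidAlgebra.of k U σ • x = x := hx σ
      rw [LinearMap.mem_ker, hTapp, this, sub_self]
  have h1 : Module.finrank k (W ⧸ LinearMap.range T) = Module.finrank k (fixedPts k U W) := by
    have h2 := Submodule.finrank_quotient_add_finrank (LinearMap.range T)
    have h3 := LinearMap.finrank_range_add_finrank_ker T
    rw [← hker]
    omega
  set f : W' →ₗ[k] (W ⧸ LinearMap.range T) :=
    (LinearMap.range T).mkQ ∘ₗ W'.subtype with hf
  have hfapp : ∀ w : W', f w = (LinearMap.range T).mkQ (w : W) := fun w => rfl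
  have hmkQL : ∀ (a : MonoidAlgebra k U) (w : W),
      (LinearMap.range T).mkQ (a • w)
        = ((MonoidAlgebra.lift k k U 1 a) : k) • (LinearMap.range T).mkQ w := by
    intro a w
    rw [← map_smul]
    exact (Submodule.Quotient.eq _).mpr (L a w)
  have hfs : Function.Surjective f := by
    intro q
    obtain ⟨w, rfl⟩ := (LinearMap.range T).mkQ_surjective q
    have hw : w ∈ Submodule.span (MonoidAlgebra k U) (W' : Set W) := by rw [hgen]; trivial
    have : ∃ w' : W', f w' = (LinearMap.range T).mkQ w := by
      induction hw using Submodule.span_induction with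
      | mem x hx => exact ⟨⟨x, hx⟩, rfl⟩
      | zero => exact ⟨0, by simp⟩
      | add x y hx hy hx' hy' =>
        obtain ⟨w1, hw1⟩ := hx'
        obtain ⟨w2, hw2⟩ := hy'
        exact ⟨w1 + w2, by rw [map_add, map_add, hw1, hw2]⟩
      | smul a x hx hx' =>
        obtain ⟨w1, hw1⟩ := hx'
        refine ⟨((MonoidAlgebra.lift k k U 1 a) : k) • w1, ?_⟩
        rw [map_smul, hw1, hmkQL]
    exact this
  have hfe : Module.finrank k (↥W') = Module.finrank k (W ⧸ LinearMap.range T) := by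
    rw [h1, hdim]
  have hinj : Function.Injective f :=
    (LinearMap.injective_iff_surjective_of_finrank_eq_finrank hfe).mpr hfs
  have key : ∀ x, (LinearMap.range T).mkQ (η x) = f (ε x) := by
    intro x
    induction x using TensorProduct.induction_on with
    | zero => simp
    | tmul a w =>
      rw [hη, hε, hfapp, Submodule.coe_smul, hmkQL]
      rfl
    | add x y hx hy => rw [map_add, map_add, map_add, map_add, hx, hy]
  intro x hx
  have h := key x
  rw [hx, map_zero] at h
  apply hinj
  rw [← h, map_zero]
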